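/- Let G be an FC-group with G/Z(G) infinite and let A be an abelian subgroup of G such that A is generated by Z(G) together with finitely many elements. Then the centralizer C_G(A) is non-abelian. -/

import Mathlib

/-- In an FC-group, the centralizer of a single element has finite index. -/
lemma finiteIndex_centralizer_singleton {G : Type*} [Group G]
    (hFC : ∀ g : G, {h : G | IsConj g h}.Finite) (g : G) :
    (Subgroup.centralizer ({g} : Set G)).FiniteIndex := by
  constructor
  rw [show (Subgroup.centralizer ({g} : Set G)).index =
      (MulAction.stabilizer (ConjAct G) g).index from by
    rw [Subgroup.centralizer_eq_comap_stabilizer]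
    exact Subgroup.index_comap_of_surjective _ ConjAct.toConjAct.surjective,
    MulAction.index_stabilizer]
  have horb : MulAction.orbit (ConjAct G) g = {h : G | IsConj g h} := by
    ext h
    rw [ConjAct.mem_orbit_conjAct]
    exact ⟨IsConj.symm, IsConj.symm⟩
  rw [horb]
  exact ((Set.ncard_pos (hFC g)).mpr ⟨g, IsConj.refl g⟩).ne'

/-- If an element commutes with every element of a set, it lies in the centralizer of
the closure of that set. -/
lemma mem_centralizer_closure {G : Type*} [Group G] (X : Set G) (x : G)
    (h : ∀ y ∈ X, y * x = x * y) :
    x ∈ Subgroup.centralizer (Subgroup.closure X : Set G) := by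
  rw [Subgroup.mem_centralizer_iff]
  intro y hy
  have hle : Subgroup.closure X ≤ Subgroup.centralizer ({x} : Set G) := by
    rw [Subgroup.closure_le]
    intro z hz
    rw [SetLike.mem_coe, Subgroup.mem_centralizer_iff]
    intro w hw
    rw [Set.mem_singleton_iff] at hw
    subst hw
    exact (h z hz).symm
  have := hle hy
  rw [Subgroup.mem_centralizer_iff] at this
  exact (this x rfl).symm

theorem centralizer_nonabelian {G : Type*} [Group G]
    (hFC : ∀ g : G, {h : G | IsConj g h}.Finite)
    (hinf : Infinite (G ⧸ Subgroup.center G))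
    (A : Subgroup G) (hA : IsMulCommutative A)
    (S : Finset G)
    (hgen : A = Subgroup.closure ((Subgroup.center G : Set G) ∪ ↑S)) :
    ¬ IsMulCommutative (Subgroup.centralizer (A : Set G)) := by
  intro hC
  set C : Subgroup G := Subgroup.centralizer (A : Set G) with hCdef
  -- C has finite index: the intersection of centralizers of elements of S lies in C.
  have hD : (⨅ s ∈ S, Subgroup.centralizer ({s} : Set G)).FiniteIndex :=
    Subgroup.finiteIndex_iInf' _ (fun s _ => finiteIndex_centralizer_singleton hFC s)
  have hDleC : (⨅ s ∈ S, Subgroup.centralizer ({s} : Set G)) ≤ C := by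
    intro x hx
    rw [hCdef, hgen]
    apply mem_centralizer_closure
    intro y hy
    rcases hy with hy | hy
    · exact (Subgroup.mem_center_iff.mp hy x).symm
    · have := Subgroup.mem_iInf.mp hx y
      have := Subgroup.mem_iInf.mp this hy
      rw [Subgroup.mem_centralizer_iff] at this
      exact this y rfl
  have hCfi : C.FiniteIndex := Subgroup.finiteIndex_of_le hDleC
  -- pick finite set of coset representatives of C
  haveI := hCfi
  haveI : Finite (G ⧸ C) := C.finite_quotient_of_finiteIndex
  let T : Set G := Set.range (fun q : G ⧸ C => q.out)
  have hTfin : T.Finite := Set.finite_range _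
  have hTop : Subgroup.closure ((C : Set G) ∪ T) = ⊤ := by
    rw [eq_top_iff]
    intro g _
    have h1 : ((QuotientGroup.mk g : G ⧸ C)).out ∈ T := Set.mem_range_self _
    have h2 : ((QuotientGroup.mk g : G ⧸ C)).out⁻¹ * g ∈ C := by
      rw [← QuotientGroup.eq]
      exact Quotient.out_eq' _
    have : g = ((QuotientGroup.mk g : G ⧸ C)).out *
        (((QuotientGroup.mk g : G ⧸ C)).out⁻¹ * g) := by group
    rw [this]
    exact mul_mem (Subgroup.subset_closure (Or.inr h1))
      (Subgroup.subset_closure (Or.inl h2))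
  -- the subgroup C ⊓ (⨅ t ∈ T, centralizer {t}) is contained in the center
  haveI hTfin' : Finite T := hTfin
  have hE : (⨅ t : T, Subgroup.centralizer ({(t : G)} : Set G)).FiniteIndex :=
    Subgroup.finiteIndex_iInf (fun t => finiteIndex_centralizer_singleton hFC t)
  have hle : C ⊓ (⨅ t : T, Subgroup.centralizer ({(t : G)} : Set G)) ≤
      Subgroup.center G := by
    intro x hx
    rcases hx with ⟨hxC, hxE⟩
    have hxcent : x ∈ Subgroup.centralizer ((Subgroup.closure ((C : Set G) ∪ T) : Subgroup G) :
        Set G) := by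
      apply mem_centralizer_closure
      intro y hy
      rcases hy with hy | hy
      · -- y ∈ C, use commutativity of C
        have := hC.is_comm.comm ⟨y, hy⟩ ⟨x, hxC⟩
        exact congrArg Subtype.val this
      · have := Subgroup.mem_iInf.mp hxE ⟨y, hy⟩
        rw [Subgroup.mem_centralizer_iff] at this
        exact this y rfl
    rw [hTop] at hxcent
    rw [← Subgroup.centralizer_univ]
    simpa using hxcent
  have hcfi : (Subgroup.center G).FiniteIndex := by
    haveI := hE
    exact Subgroup.finiteIndex_of_le hle
  haveI := hcfi
  haveI : Finite (G ⧸ Subgroup.center G) := (Subgroup.center G).finite_quotient_of_finiteIndex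
  exact not_finite (G ⧸ Subgroup.center G)
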